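/- Let g be an element of Thompson's group V with N(g) ≥ 4. Then N(g)−1 ≤ N(g·x0^{−1}) ≤ N(g)+1. Moreover: (1) if ℓ1(g) = 1 then N(g·x0^{−1}) = N(g)+1 and ℓ1(g·x0^{−1}) = 1; (2) if ℓ1(g) ≠ 1 then N(g·x0^{−1}) = N(g) or N(g·x0^{−1}) = N(g)−1, and ℓ1(g·x0^{−1}) = ℓ1(g)−1; (3) if ℓ1(g) ≠ 1 and either the word 0 or the word 10 is a strict prefix of the range code of some branch of g, then N(g·x0^{−1}) = N(g) and the word 0 is a strict prefix of the range code of some branch of g·x0^{−1}. -/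

import Mathlib

/-!
Formalization framework for Thompson's groups `F ≤ T ≤ V` acting on the
Cantor set `{0,1}^ℕ`.  Elements of `V` are permutations of the Cantor set
admitting a finite table of branches `u → v` (complete prefix codes) with
`g(uω) = vω`.  Products in the paper are composed left-to-right, i.e. the
paper's `g·h` is `Equiv.trans g h` (equivalently `h * g` in `Equiv.Perm`).
-/

abbrev CSeq : Type := ℕ → Bool
abbrev VPerm : Type := Equiv.Perm CSeq

/-- Concatenation of a finite binary word with an infinite binary word. -/
def app (u : List Bool) (ω : CSeq) : CSeq := fun n =>
  if h : n < u.length then u[n] else ω (n - u.length)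

/-- The finite word `u` is a prefix of the infinite word `ω`. -/
def IsPref (u : List Bool) (ω : CSeq) : Prop := ∃ ω', ω = app u ω'

/-- The finite table of branches `T` represents the permutation `g` of the
Cantor set: the domain codes and the range codes each form a complete prefix
code, and `g` maps `uω ↦ vω` for every branch `(u, v) ∈ T`. -/
def Represents (g : VPerm) (T : Finset (List Bool × List Bool)) : Prop :=
  (∀ ω : CSeq, ∃! p : List Bool × List Bool, p ∈ T ∧ IsPref p.1 ω) ∧
  (∀ ω : CSeq, ∃! p : List Bool × List Bool, p ∈ T ∧ IsPref p.2 ω) ∧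
  (∀ p ∈ T, ∀ ω : CSeq, g (app p.1 ω) = app p.2 ω)

/-- A table of branches is reduced if it contains no pair of branches
`u0 → v0`, `u1 → v1`. -/
def Reduced (T : Finset (List Bool × List Bool)) : Prop :=
  ∀ u v : List Bool,
    ¬((u ++ [false], v ++ [false]) ∈ T ∧ (u ++ [true], v ++ [true]) ∈ T)

/-- Membership in Thompson's group `V`. -/
def InV (g : VPerm) : Prop := ∃ T, Represents g T

/-- `u → v` is a branch of the (unique) reduced representation of `g`. -/
def IsBranch (g : VPerm) (u v : List Bool) : Prop :=
  ∃ T, Represents g T ∧ Reduced T ∧ (u, v) ∈ T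

/-- `N(g)`: the number of branches of the reduced representation of `g`. -/
noncomputable def Nbr (g : VPerm) : ℕ :=
  sInf {n | ∃ T, Represents g T ∧ Reduced T ∧ T.card = n}

/-- `ℓ0(g)`: the unique `ℓ ≥ 1` such that `0^ℓ` is the range code of some
branch of `g`. -/
noncomputable def ell0 (g : VPerm) : ℕ :=
  sInf {ℓ | 1 ≤ ℓ ∧ ∃ u, IsBranch g u (List.replicate ℓ false)}

/-- `ℓ1(g)`: the unique `ℓ ≥ 1` such that `1^ℓ` is the range code of some
branch of `g`. -/
noncomputable def ell1 (g : VPerm) : ℕ :=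
  sInf {ℓ | 1 ≤ ℓ ∧ ∃ u, IsBranch g u (List.replicate ℓ true)}

/-- `w` is a strict prefix of the range code of some branch of `g`. -/
def StrictPrefOfBranch (g : VPerm) (w : List Bool) : Prop :=
  ∃ u v, IsBranch g u v ∧ w <+: v ∧ w ≠ v

/-- Strict lexicographic order on infinite binary words. -/
def lexLt (a b : CSeq) : Prop :=
  ∃ n, (∀ i < n, a i = b i) ∧ a n = false ∧ b n = true

/-- Membership in Thompson's group `F`: an element of `V` preserving the
(lexicographic) order of the Cantor set. -/
def InF (g : VPerm) : Prop :=
  InV g ∧ ∀ a b : CSeq, lexLt a b → lexLt (g a) (g b)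

/-- `(a, b, c)` is a (strict) cyclically ordered triple. -/
def cyc3 (a b c : CSeq) : Prop :=
  (lexLt a b ∧ lexLt b c) ∨ (lexLt b c ∧ lexLt c a) ∨ (lexLt c a ∧ lexLt a b)

/-- Membership in Thompson's group `T`: an element of `V` preserving the
cyclic order of the Cantor set. -/
def InT (g : VPerm) : Prop :=
  InV g ∧ ∀ a b c : CSeq, cyc3 a b c → cyc3 (g a) (g b) (g c)

/-- Word length of `g` with respect to the generating set `S` (letters are
elements of `S` or inverses of elements of `S`). -/
noncomputable def wlen (S : Set VPerm) (g : VPerm) : ℕ :=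
  sInf {n | ∃ l : List VPerm,
    l.length = n ∧ (∀ x ∈ l, x ∈ S ∨ x⁻¹ ∈ S) ∧ l.prod = g}

/-- `h'` is the copy `h_{[u]}` of `h` supported on the cylinder of `u`. -/
def IsCopy (h : VPerm) (u : List Bool) (h' : VPerm) : Prop :=
  (∀ ω : CSeq, h' (app u ω) = app u (h ω)) ∧
  (∀ ω : CSeq, ¬ IsPref u ω → h' ω = ω)

/-- Evaluation (left-to-right) of the word `w` starting at the element `g`:
the paper's product `g · w`. -/
def wordEval (g : VPerm) (w : List VPerm) : VPerm :=
  w.foldl (fun a b => a.trans b) g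

/-- Branches of the generator `x0`: `00→0`, `01→10`, `1→11`. -/
def x0T : Finset (List Bool × List Bool) :=
  {([false, false], [false]), ([false, true], [true, false]),
   ([true], [true, true])}

/-- Branches of the generator `x1`: `0→0`, `100→10`, `101→110`, `11→111`. -/
def x1T : Finset (List Bool × List Bool) :=
  {([false], [false]), ([true, false, false], [true, false]),
   ([true, false, true], [true, true, false]),
   ([true, true], [true, true, true])}

/-- Branches of the generator `c1`: `0→10`, `10→11`, `11→0`. -/
def c1T : Finset (List Bool × List Bool) :=
  {([false], [true, false]), ([true, false], [true, true]),
   ([true, true], [false])}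

/-- Branches of the generator `π0`: `0→10`, `10→0`, `11→11`. -/
def pi0T : Finset (List Bool × List Bool) :=
  {([false], [true, false]), ([true, false], [false]),
   ([true, true], [true, true])}

/-- The standard generators `x_j`, `j ≥ 0`, of `F`: for `r ≥ 1`,
`x_{r+1} = x0^{-r} · x1 · x0^{r}` in the left-to-right convention of the
paper, i.e. `x0 ^ r * x1 * (x0⁻¹) ^ r` in `Equiv.Perm`. -/
def xseq (x0 x1 : VPerm) : ℕ → VPerm
  | 0 => x0
  | r + 1 => x0 ^ r * x1 * (x0⁻¹) ^ r

section Aux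

lemma app_append (u v : List Bool) (ω : CSeq) : app (u ++ v) ω = app u (app v ω) := by
  funext n
  simp only [app, List.length_append]
  by_cases h1 : n < u.length
  · rw [dif_pos (by omega), dif_pos h1, List.getElem_append_left h1]
  · by_cases h2 : n < u.length + v.length
    · rw [dif_pos h2, dif_neg h1, dif_pos (by omega), List.getElem_append_right (by omega)]
    · rw [dif_neg (by omega), dif_neg h1, dif_neg (by omega)]
      congr 1; omega

lemma app_eval_lt {u : List Bool} {ω : CSeq} {n : ℕ} (h : n < u.length) : app u ω n = u[n] :=
  dif_pos h

lemma app_eval_ge {u : List Bool} {ω : CSeq} {n : ℕ} (h : u.length ≤ n) :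
    app u ω n = ω (n - u.length) := dif_neg (by omega)

lemma app_right_cancel {u : List Bool} {ω ω' : CSeq} (h : app u ω = app u ω') : ω = ω' := by
  funext n
  have := congrFun h (n + u.length)
  rwa [app_eval_ge (by omega), app_eval_ge (by omega), Nat.add_sub_cancel] at this

lemma app_left_cancel {u v : List Bool} (h : ∀ ω, app u ω = app v ω) : u = v := by
  have hlen : u.length = v.length := by
    by_contra hne
    rcases Nat.lt_or_ge u.length v.length with hlt | hge
    · have := congrFun (h (fun _ => !v[u.length])) u.length
      rw [app_eval_ge le_rfl, app_eval_lt hlt] at this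
      simp at this
    · have hlt : v.length < u.length := by omega
      have := congrFun (h (fun _ => !u[v.length])) v.length
      rw [app_eval_lt hlt, app_eval_ge le_rfl] at this
      simp at this
  apply List.ext_getElem hlen
  intro i h1 h2
  have := congrFun (h (fun _ => false)) i
  rwa [app_eval_lt h1, app_eval_lt h2] at this


lemma isPref_iff {u : List Bool} {ω : CSeq} :
    IsPref u ω ↔ ∀ i (h : i < u.length), ω i = u[i] := by
  constructor
  · rintro ⟨ω', rfl⟩ i h; exact app_eval_lt h
  · intro h
    refine ⟨fun n => ω (n + u.length), ?_⟩
    funext n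
    by_cases hn : n < u.length
    · rw [app_eval_lt hn]; exact h n hn
    · rw [app_eval_ge (by omega)]; congr 1; omega

lemma isPref_app (u : List Bool) (ω : CSeq) : IsPref u (app u ω) := ⟨ω, rfl⟩

lemma isPref_of_prefix {u v : List Bool} {ω : CSeq} (h : u <+: v) (hv : IsPref v ω) :
    IsPref u ω := by
  rw [isPref_iff] at hv ⊢
  intro i hi
  rw [hv i (lt_of_lt_of_le hi h.length_le)]
  exact (List.IsPrefix.getElem h hi).symm

lemma isPref_comparable {u v : List Bool} {ω : CSeq} (hu : IsPref u ω) (hv : IsPref v ω) :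
    u <+: v ∨ v <+: u := by
  rw [isPref_iff] at hu hv
  rcases le_total u.length v.length with h | h
  · left
    refine List.prefix_iff_eq_take.2 (List.ext_getElem (by simp [h]) ?_)
    intro i h1 h2
    rw [List.getElem_take, ← hu i h1, hv i (by omega)]
  · right
    refine List.prefix_iff_eq_take.2 (List.ext_getElem (by simp [h]) ?_)
    intro i h1 h2
    rw [List.getElem_take, ← hv i h1, hu i (by omega)]

lemma isPref_append_elem {u : List Bool} {ω : CSeq} (h : IsPref u ω) :
    IsPref (u ++ [ω u.length]) ω := by
  rw [isPref_iff] at h ⊢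
  intro i hi
  simp only [List.length_append, List.length_singleton] at hi
  by_cases h' : i < u.length
  · rw [List.getElem_append_left h']; exact h i h'
  · have : i = u.length := by omega
    subst this
    rw [List.getElem_append_right (le_refl _)]
    simp

lemma isPref_append_last {u : List Bool} {b : Bool} {ω : CSeq} (h : IsPref (u ++ [b]) ω) :
    ω u.length = b := by
  rw [isPref_iff] at h
  have := h u.length (by simp)
  rw [List.getElem_append_right (le_refl _)] at this
  simpa using this

lemma cons_expand (ω : CSeq) : ω = app [ω 0] (fun n => ω (n + 1)) := by
  funext n
  cases n with
  | zero => rw [app_eval_lt (by simp)]; rfl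
  | succ m => rw [app_eval_ge (by simp)]; rfl

lemma replicate_of_isPref_const {v : List Bool} {b : Bool}
    (h : IsPref v (fun _ => b)) : v = List.replicate v.length b := by
  rw [isPref_iff] at h
  apply List.eq_replicate_of_mem
  intro x hx
  obtain ⟨i, hi, rfl⟩ := List.getElem_of_mem hx
  exact (h i hi).symm

lemma replicate_prefix_comparable {m ℓ : ℕ} {b : Bool} :
    List.replicate m b <+: List.replicate ℓ b ∨ List.replicate ℓ b <+: List.replicate m b := by
  rcases le_total m ℓ with h | h
  · left; exact ⟨List.replicate (ℓ - m) b, by rw [← List.replicate_add]; congr 1; omega⟩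
  · right; exact ⟨List.replicate (m - ℓ) b, by rw [← List.replicate_add]; congr 1; omega⟩

/-- Domain codes are mutually prefix-free: comparable ⇒ same pair. -/
lemma dom_pf {g : VPerm} {T : Finset (List Bool × List Bool)} (hrep : Represents g T)
    {p q : List Bool × List Bool} (hp : p ∈ T) (hq : q ∈ T) (h : p.1 <+: q.1) : p = q := by
  obtain ⟨hex, -, -⟩ := hrep
  obtain ⟨r, -, hr⟩ := hex (app q.1 (fun _ => false))
  have h1 := hr p ⟨hp, isPref_of_prefix h (isPref_app _ _)⟩
  have h2 := hr q ⟨hq, isPref_app _ _⟩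
  rw [h1, h2]

lemma ran_pf {g : VPerm} {T : Finset (List Bool × List Bool)} (hrep : Represents g T)
    {p q : List Bool × List Bool} (hp : p ∈ T) (hq : q ∈ T) (h : p.2 <+: q.2) : p = q := by
  obtain ⟨-, hex, -⟩ := hrep
  obtain ⟨r, -, hr⟩ := hex (app q.2 (fun _ => false))
  have h1 := hr p ⟨hp, isPref_of_prefix h (isPref_app _ _)⟩
  have h2 := hr q ⟨hq, isPref_app _ _⟩
  rw [h1, h2]

/-- `g` maps the cylinder of `u` onto the cylinder of `v` uniformly. -/
def Pg (g : VPerm) (u v : List Bool) : Prop := ∀ ω, g (app u ω) = app v ω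

lemma Pg.unique {g : VPerm} {u v v' : List Bool} (h : Pg g u v) (h' : Pg g u v') : v = v' :=
  app_left_cancel (fun ω => by rw [← h ω, ← h' ω])

/-- Key lemma: if `g` is uniform on the cylinder of `w`, no branch of a reduced
representation can have a domain code strictly below `w`. -/
lemma lemA {g : VPerm} {T : Finset (List Bool × List Bool)} (hrep : Represents g T)
    (hred : Reduced T) {w v' : List Bool} (hPg : Pg g w v')
    {s₀ y₀ : List Bool} (hs₀ : s₀ ≠ []) (hmem : (w ++ s₀, y₀) ∈ T) : False := by
  have key : ∀ s y, (w ++ s, y) ∈ T → y = v' ++ s := by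
    intro s y hmem'
    have hbr := hrep.2.2 _ hmem'
    refine (app_left_cancel (fun ω => ?_)).symm
    have h1 := hbr ω
    rw [app_append] at h1
    rw [← h1, hPg (app s ω), app_append]
  have hne : ((T.filter (fun p => w <+: p.1))).Nonempty :=
    ⟨(w ++ s₀, y₀), Finset.mem_filter.2 ⟨hmem, ⟨s₀, rfl⟩⟩⟩
  obtain ⟨p, hpmem, hpmax⟩ := Finset.exists_max_image _ (fun p => p.1.length) hne
  obtain ⟨p1, p2⟩ := p
  rw [Finset.mem_filter] at hpmem
  obtain ⟨hpT, ⟨s, hps⟩⟩ := hpmem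
  simp only at hps hpmax hpT
  have hsne : s ≠ [] := by
    rintro rfl
    rw [List.append_nil] at hps
    have hpe := dom_pf hrep hpT hmem (by simp only; rw [← hps]; exact ⟨s₀, rfl⟩)
    simp only [Prod.mk.injEq] at hpe
    rw [← hps] at hpe
    exact hs₀ (List.append_cancel_left (by rw [List.append_nil]; exact hpe.1)).symm
  obtain ⟨t, b, rfl⟩ : ∃ t b, s = t ++ [b] := by
    rcases List.eq_nil_or_concat s with h | ⟨t, b, h⟩
    · exact absurd h hsne
    · exact ⟨t, b, by simpa [List.concat_eq_append] using h⟩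
  have hp1 : p1 = w ++ (t ++ [b]) := hps.symm
  subst hp1
  have hp2 : p2 = v' ++ (t ++ [b]) := key _ _ hpT
  subst hp2
  -- look at the sibling cylinder
  set ω : CSeq := app (w ++ (t ++ [!b])) (fun _ => false) with hω
  obtain ⟨q, ⟨hqT, hqpref⟩, -⟩ := hrep.1 ω
  obtain ⟨q1, q2⟩ := q
  simp only at hqT hqpref
  have hwpref : IsPref w ω := isPref_of_prefix ⟨t ++ [!b], rfl⟩ (isPref_app _ _)
  have hq1 : q1 = w ++ (t ++ [!b]) := by
    rcases isPref_comparable hqpref hwpref with hc | hc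
    · -- q1 prefix of w, hence prefix of p1 : prefix-freeness forces equality, too short
      have he := dom_pf hrep hqT hpT (by simpa using hc.trans ⟨t ++ [b], rfl⟩)
      simp only [Prod.mk.injEq] at he
      have := hc.length_le
      rw [he.1] at this
      simp at this
    · -- w prefix of q1
      have hqlen : q1.length ≤ (w ++ (t ++ [b])).length :=
        hpmax (q1, q2) (Finset.mem_filter.2 ⟨hqT, hc⟩)
      rcases isPref_comparable hqpref (isPref_app _ _) with hc2 | hc2
      · by_cases hlen : q1.length < (w ++ (t ++ [!b])).length
        · -- q1 <+: w ++ t, so q1 <+: p1 strictly: contradiction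
          have hq_wt : q1 <+: w ++ t := by
            apply List.prefix_of_prefix_length_le hc2
              (⟨[!b], by rw [List.append_assoc]⟩ : w ++ t <+: w ++ (t ++ [!b]))
            simp at hlen ⊢
            omega
          have he := dom_pf hrep hqT hpT
            (by simpa using hq_wt.trans ⟨[b], by rw [List.append_assoc]⟩)
          simp only [Prod.mk.injEq] at he
          have h1 := hq_wt.length_le
          rw [he.1] at h1
          simp at h1
        · have h1 := hc2.length_le
          exact List.IsPrefix.eq_of_length hc2 (by omega)
      · have h1 := hc2.length_le
        refine (List.IsPrefix.eq_of_length hc2 (by simp at hqlen h1 ⊢; omega)).symm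
  subst hq1
  have hq2 : q2 = v' ++ (t ++ [!b]) := key _ _ hqT
  subst hq2
  have hp' : ((w ++ t) ++ [b], (v' ++ t) ++ [b]) ∈ T := by
    rw [List.append_assoc, List.append_assoc]; exact hpT
  have hq' : ((w ++ t) ++ [!b], (v' ++ t) ++ [!b]) ∈ T := by
    rw [List.append_assoc, List.append_assoc]; exact hqT
  cases b
  · exact hred (w ++ t) (v' ++ t) ⟨hp', by simpa using hq'⟩
  · exact hred (w ++ t) (v' ++ t) ⟨by simpa using hq', hp'⟩

/-- Uniqueness of the reduced representation. -/
lemma reduced_unique {g : VPerm} {T T' : Finset (List Bool × List Bool)}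
    (hrep : Represents g T) (hred : Reduced T)
    (hrep' : Represents g T') (hred' : Reduced T') : T = T' := by
  have main : ∀ (S S' : Finset (List Bool × List Bool)), Represents g S → Reduced S →
      Represents g S' → Reduced S' → S ⊆ S' := by
    intro S S' hS hSr hS' hSr' p hp
    obtain ⟨u, v⟩ := p
    have hPg : Pg g u v := hS.2.2 _ hp
    obtain ⟨q, ⟨hqT, hqpref⟩, -⟩ := hS'.1 (app u (fun _ => false))
    obtain ⟨u', v'⟩ := q
    simp only at hqT hqpref
    have hPg' : Pg g u' v' := hS'.2.2 _ hqT
    rcases isPref_comparable hqpref (isPref_app _ _) with hc | hc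
    · obtain ⟨s, rfl⟩ := hc
      rcases eq_or_ne s [] with rfl | hsne
      · rw [List.append_nil] at hp hPg ⊢
        rwa [← Pg.unique hPg' hPg]
      · exact absurd (lemA hS hSr hPg' hsne hp) id
    · obtain ⟨s, rfl⟩ := hc
      rcases eq_or_ne s [] with rfl | hsne
      · rw [List.append_nil] at hqT hPg'
        rwa [← Pg.unique hPg' hPg]
      · exact absurd (lemA hS' hSr' hPg hsne hqT) id
  exact Finset.Subset.antisymm (main _ _ hrep hred hrep' hred')
    (main _ _ hrep' hred' hrep hred)

lemma isBranch_iff {g : VPerm} {T : Finset (List Bool × List Bool)}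
    (hrep : Represents g T) (hred : Reduced T) {u v : List Bool} :
    IsBranch g u v ↔ (u, v) ∈ T := by
  constructor
  · rintro ⟨T', hrep', hred', hmem⟩
    rwa [reduced_unique hrep hred hrep' hred']
  · intro h; exact ⟨T, hrep, hred, h⟩

lemma Nbr_eq {g : VPerm} {T : Finset (List Bool × List Bool)}
    (hrep : Represents g T) (hred : Reduced T) : Nbr g = T.card := by
  have hset : {n | ∃ T', Represents g T' ∧ Reduced T' ∧ T'.card = n} = {T.card} := by
    ext n
    simp only [Set.mem_setOf_eq, Set.mem_singleton_iff]
    constructor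
    · rintro ⟨T', h1, h2, rfl⟩
      rw [reduced_unique h1 h2 hrep hred]
    · rintro rfl; exact ⟨T, hrep, hred, rfl⟩
  rw [Nbr, hset, csInf_singleton]

lemma exists_reduced_rep {g : VPerm} (h : 0 < Nbr g) :
    ∃ T, Represents g T ∧ Reduced T ∧ T.card = Nbr g := by
  have hne : {n | ∃ T, Represents g T ∧ Reduced T ∧ T.card = n}.Nonempty := by
    by_contra hc
    rw [Set.not_nonempty_iff_eq_empty] at hc
    rw [Nbr, hc, Nat.sInf_empty] at h
    exact absurd h (lt_irrefl 0)
  exact Nat.sInf_mem hne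

lemma range_ne_nil {g : VPerm} {T : Finset (List Bool × List Bool)}
    (hrep : Represents g T) (hcard : 2 ≤ T.card) {u v : List Bool}
    (hmem : (u, v) ∈ T) : v ≠ [] := by
  rintro rfl
  have hall : ∀ q ∈ T, q = (u, ([] : List Bool)) :=
    fun q hq => (ran_pf hrep hmem hq (by simp)).symm
  have : T.card ≤ 1 := Finset.card_le_one.2 (by intro a ha b hb; rw [hall a ha, hall b hb])
  omega

lemma ell1_eq {g : VPerm} {T : Finset (List Bool × List Bool)}
    (hrep : Represents g T) (hred : Reduced T) {u : List Bool} {m : ℕ}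
    (hm : 1 ≤ m) (hmem : (u, List.replicate m true) ∈ T) : ell1 g = m := by
  have hset : {ℓ | 1 ≤ ℓ ∧ ∃ u', IsBranch g u' (List.replicate ℓ true)} = {m} := by
    ext ℓ
    simp only [Set.mem_setOf_eq, Set.mem_singleton_iff]
    constructor
    · rintro ⟨h1, u', hbr⟩
      rw [isBranch_iff hrep hred] at hbr
      have := replicate_prefix_comparable (m := ℓ) (ℓ := m) (b := true)
      rcases this with hc | hc
      · have := ran_pf hrep hbr hmem hc
        simp only [Prod.mk.injEq] at this
        have := congrArg List.length this.2
        simpa using this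
      · have := ran_pf hrep hmem hbr hc
        simp only [Prod.mk.injEq] at this
        have := congrArg List.length this.2
        simpa using this.symm
    · rintro rfl
      exact ⟨hm, u, (isBranch_iff hrep hred).2 hmem⟩
  rw [ell1, hset, csInf_singleton]

lemma exists_true_branch {g : VPerm} {T : Finset (List Bool × List Bool)}
    (hrep : Represents g T) (hcard : 2 ≤ T.card) :
    ∃ u m, 1 ≤ m ∧ (u, List.replicate m true) ∈ T := by
  obtain ⟨p, ⟨hpT, hppref⟩, -⟩ := hrep.2.1 (fun _ => true)
  obtain ⟨u, v⟩ := p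
  simp only at hpT hppref
  have hv := replicate_of_isPref_const hppref
  refine ⟨u, v.length, ?_, by rwa [← hv]⟩
  have := range_ne_nil hrep hcard hpT
  cases v
  · simp at this
  · simp

/-- Range completeness follows from domain completeness and the branch property. -/
lemma range_complete (h : VPerm) (T : Finset (List Bool × List Bool))
    (hdom : ∀ ω, ∃! p : List Bool × List Bool, p ∈ T ∧ IsPref p.1 ω)
    (hbr : ∀ p ∈ T, ∀ ω, h (app p.1 ω) = app p.2 ω) :
    ∀ ω, ∃! p : List Bool × List Bool, p ∈ T ∧ IsPref p.2 ω := by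
  intro ω
  obtain ⟨p, ⟨hpT, hppref⟩, hpq⟩ := hdom (h.symm ω)
  obtain ⟨ω₁, hω₁⟩ := hppref
  refine ⟨p, ⟨hpT, ⟨ω₁, ?_⟩⟩, ?_⟩
  · rw [← hbr p hpT ω₁, ← hω₁]
    simp
  · rintro q ⟨hqT, ⟨ω₂, hω₂⟩⟩
    apply hpq
    refine ⟨hqT, ⟨ω₂, ?_⟩⟩
    apply h.injective
    rw [hbr q hqT ω₂, ← hω₂]
    simp

/-- The effect of post-composition by `x0⁻¹` on range codes. -/
def phi : List Bool → List Bool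
  | false :: w => false :: false :: w
  | true :: false :: w => false :: true :: w
  | true :: true :: w => true :: w
  | l => l

variable {x0 : VPerm}

lemma x0inv_0 (hx0 : Represents x0 x0T) (ω : CSeq) :
    x0⁻¹ (app [false] ω) = app [false, false] ω := by
  have h := hx0.2.2 ([false, false], [false]) (by simp [x0T]) ω
  simp only at h
  rw [← h]
  exact x0.symm_apply_apply _

lemma x0inv_10 (hx0 : Represents x0 x0T) (ω : CSeq) :
    x0⁻¹ (app [true, false] ω) = app [false, true] ω := by
  have h := hx0.2.2 ([false, true], [true, false]) (by simp [x0T]) ω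
  simp only at h
  rw [← h]
  exact x0.symm_apply_apply _

lemma x0inv_11 (hx0 : Represents x0 x0T) (ω : CSeq) :
    x0⁻¹ (app [true, true] ω) = app [true] ω := by
  have h := hx0.2.2 ([true], [true, true]) (by simp [x0T]) ω
  simp only at h
  rw [← h]
  exact x0.symm_apply_apply _

lemma phi_spec (hx0 : Represents x0 x0T) {v : List Bool} (h0 : v ≠ [])
    (h1 : v ≠ [true]) (ω : CSeq) : x0⁻¹ (app v ω) = app (phi v) ω := by
  match v with
  | [] => exact absurd rfl h0
  | false :: w =>
      have e : false :: w = [false] ++ w := rfl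
      rw [e, app_append, x0inv_0 hx0]
      show _ = app ([false, false] ++ w) ω
      rw [app_append]
  | [true] => exact absurd rfl h1
  | true :: false :: w =>
      have e : true :: false :: w = [true, false] ++ w := rfl
      rw [e, app_append, x0inv_10 hx0]
      show _ = app ([false, true] ++ w) ω
      rw [app_append]
  | true :: true :: w =>
      have e : true :: true :: w = [true, true] ++ w := rfl
      rw [e, app_append, x0inv_11 hx0]
      show _ = app ([true] ++ w) ω
      rw [app_append]

lemma range_shape {g : VPerm} {T : Finset (List Bool × List Bool)}
    (hrep : Represents g T) (hcard : 2 ≤ T.card)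
    (hno1 : ∀ u, (u, [true]) ∉ T) {u v : List Bool} (hmem : (u, v) ∈ T) :
    (∃ w, v = false :: w) ∨ (∃ w, v = true :: false :: w) ∨
      (∃ w, v = true :: true :: w) := by
  have hne := range_ne_nil hrep hcard hmem
  match v with
  | [] => exact absurd rfl hne
  | false :: w => exact Or.inl ⟨w, rfl⟩
  | [true] => exact absurd hmem (hno1 u)
  | true :: false :: w => exact Or.inr (Or.inl ⟨w, rfl⟩)
  | true :: true :: w => exact Or.inr (Or.inr ⟨w, rfl⟩)

lemma dom_inj {g : VPerm} {T : Finset (List Bool × List Bool)} (hrep : Represents g T)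
    {p q : List Bool × List Bool} (hp : p ∈ T) (hq : q ∈ T) (h : p.1 = q.1) : p = q :=
  dom_pf hrep hp hq (h ▸ List.prefix_refl _)

/-- Core analysis: a reduction in the `φ`-image of a reduced table forces the
special configuration `(x0 → 0, x1 → 10)`. -/
lemma phi_red_core {g : VPerm} {T : Finset (List Bool × List Bool)}
    (hrep : Represents g T) (hred : Reduced T) (hcard : 2 ≤ T.card)
    (hno1 : ∀ u, (u, [true]) ∉ T) {x y v₁ v₂ : List Bool}
    (hv1 : (x ++ [false], v₁) ∈ T) (hv2 : (x ++ [true], v₂) ∈ T)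
    (hp1 : phi v₁ = y ++ [false]) (hp2 : phi v₂ = y ++ [true]) :
    v₁ = [false] ∧ v₂ = [true, false] ∧ y = [false] := by
  rcases range_shape hrep hcard hno1 hv1 with ⟨w₁, rfl⟩ | ⟨w₁, rfl⟩ | ⟨w₁, rfl⟩ <;>
    rcases range_shape hrep hcard hno1 hv2 with ⟨w₂, rfl⟩ | ⟨w₂, rfl⟩ | ⟨w₂, rfl⟩ <;>
    simp only [phi] at hp1 hp2 <;>
    rcases y with _ | ⟨c, y'⟩ <;>
    try (simp at hp1 hp2; done)
  all_goals (rcases c with _ | _ <;> try (simp at hp1 hp2; done))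
  all_goals (rcases y' with _ | ⟨d, y''⟩ <;> try (simp at hp1 hp2; done))
  -- remaining: genuine cases
  all_goals simp at hp1 hp2
  case inl.inl.cons.false.cons =>
    exact absurd ⟨by simpa [hp1.2] using hv1, by simpa [hp2.2] using hv2⟩
      (hred x (false :: y''))
  case inl.inr.inl.cons.false.nil => simp [hp1, hp2]
  case inl.inr.inl.cons.false.cons => simp [hp1.1] at hp2
  case inr.inl.inl.cons.false.cons => simp [hp1.1] at hp2
  case inr.inl.inr.inl.cons.false.cons =>
    exact absurd ⟨by simpa [hp1.2] using hv1, by simpa [hp2.2] using hv2⟩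
      (hred x (true :: false :: y''))
  case inr.inr.inr.inr.cons.true.nil =>
    exact absurd ⟨by simpa [hp1] using hv1, by simpa [hp2] using hv2⟩
      (hred x [true, true])
  case inr.inr.inr.inr.cons.true.cons =>
    exact absurd ⟨by simpa [hp1] using hv1, by simpa [hp2] using hv2⟩
      (hred x (true :: true :: d :: y''))

lemma mem_image_phi {T : Finset (List Bool × List Bool)} {a b : List Bool} :
    (a, b) ∈ T.image (fun p => (p.1, phi p.2)) ↔ ∃ v, (a, v) ∈ T ∧ phi v = b := by
  simp only [Finset.mem_image, Prod.mk.injEq]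
  constructor
  · rintro ⟨⟨u, v⟩, hmem, h1, h2⟩
    exact ⟨v, by rwa [← h1], h2⟩
  · rintro ⟨v, hmem, h⟩
    exact ⟨(a, v), hmem, rfl, h⟩

lemma case2a_represents {x0 g : VPerm} (hx0 : Represents x0 x0T)
    {T : Finset (List Bool × List Bool)}
    (hrep : Represents g T) (hcard : 2 ≤ T.card)
    (hno1 : ∀ u, (u, [true]) ∉ T) :
    Represents (g.trans x0⁻¹) (T.image (fun p => (p.1, phi p.2))) ∧
      (T.image (fun p => (p.1, phi p.2))).card = T.card := by
  set T' := T.image (fun p => (p.1, phi p.2)) with hT'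
  have hdom : ∀ ω : CSeq, ∃! p : List Bool × List Bool, p ∈ T' ∧ IsPref p.1 ω := by
    intro ω
    obtain ⟨p, ⟨hpT, hppref⟩, hpu⟩ := hrep.1 ω
    refine ⟨(p.1, phi p.2), ⟨Finset.mem_image_of_mem _ hpT, hppref⟩, ?_⟩
    rintro ⟨a, b⟩ ⟨hq, hqpref⟩
    obtain ⟨v, hv, rfl⟩ := mem_image_phi.1 hq
    have := hpu (a, v) ⟨hv, hqpref⟩
    rw [← this]
  have hbr : ∀ p ∈ T', ∀ ω : CSeq, (g.trans x0⁻¹) (app p.1 ω) = app p.2 ω := by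
    rintro ⟨a, b⟩ hq ω
    obtain ⟨v, hv, rfl⟩ := mem_image_phi.1 hq
    rw [Equiv.trans_apply, hrep.2.2 _ hv,
      phi_spec hx0 (range_ne_nil hrep hcard hv) (fun h => hno1 a (h ▸ hv)) ω]
  refine ⟨⟨hdom, range_complete _ _ hdom hbr, hbr⟩, ?_⟩
  apply Finset.card_image_of_injOn
  intro p hp q hq h
  simp only [Prod.mk.injEq] at h
  exact dom_inj hrep hp hq h.1

lemma case2a_reduced {g : VPerm} {T : Finset (List Bool × List Bool)}
    (hrep : Represents g T) (hred : Reduced T) (hcard : 2 ≤ T.card)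
    (hno1 : ∀ u, (u, [true]) ∉ T)
    (hnoC : ¬ ∃ a, (a ++ [false], [false]) ∈ T ∧ (a ++ [true], [true, false]) ∈ T) :
    Reduced (T.image (fun p => (p.1, phi p.2))) := by
  intro x y ⟨h1, h2⟩
  obtain ⟨v₁, hv1, hp1⟩ := mem_image_phi.1 h1
  obtain ⟨v₂, hv2, hp2⟩ := mem_image_phi.1 h2
  obtain ⟨e1, e2, -⟩ := phi_red_core hrep hred hcard hno1 hv1 hv2 hp1 hp2
  exact hnoC ⟨x, e1 ▸ hv1, e2 ▸ hv2⟩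

lemma append_single_inj {α : Type*} {y z : List α} {b c : α}
    (h : y ++ [b] = z ++ [c]) : y = z ∧ b = c := by
  obtain ⟨h1, h2⟩ := List.append_inj' h rfl
  exact ⟨h1, by simpa using h2⟩

lemma case1_shape {g : VPerm} {T : Finset (List Bool × List Bool)}
    (hrep : Represents g T) (hcard : 2 ≤ T.card) {u₁ : List Bool}
    (hu₁ : (u₁, [true]) ∈ T) {a v : List Bool}
    (hmem : (a, v) ∈ T.erase (u₁, [true])) : ∃ w, v = false :: w := by
  have hT := Finset.mem_of_mem_erase hmem
  have hne : (a, v) ≠ (u₁, [true]) := Finset.ne_of_mem_erase hmem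
  have hv := range_ne_nil hrep hcard hT
  match v with
  | [] => exact absurd rfl hv
  | false :: w => exact ⟨w, rfl⟩
  | true :: w =>
      have := ran_pf hrep hu₁ hT (p := (u₁, [true])) (q := (a, true :: w)) ⟨w, rfl⟩
      simp only [Prod.mk.injEq] at this
      exact absurd (by rw [this.1, ← this.2]) hne

section Case1

variable {x0 g : VPerm} {T : Finset (List Bool × List Bool)} {u₁ : List Bool}

/-- The table for `g·x0⁻¹` when `1` is a range code of `g`. -/
def T1 (T : Finset (List Bool × List Bool)) (u₁ : List Bool) :
    Finset (List Bool × List Bool) :=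
  (T.erase (u₁, [true])).image (fun p => (p.1, phi p.2)) ∪
    {(u₁ ++ [false], [false, true]), (u₁ ++ [true], [true])}

lemma mem_T1 {a b : List Bool} :
    (a, b) ∈ T1 T u₁ ↔ (∃ v, (a, v) ∈ T.erase (u₁, [true]) ∧ phi v = b) ∨
      (a, b) = (u₁ ++ [false], [false, true]) ∨ (a, b) = (u₁ ++ [true], [true]) := by
  simp only [T1, Finset.mem_union, Finset.mem_insert, Finset.mem_singleton]
  constructor
  · rintro (h | h | h)
    · obtain ⟨v, hv, h⟩ := mem_image_phi.1 h
      exact Or.inl ⟨v, hv, h⟩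
    · exact Or.inr (Or.inl h)
    · exact Or.inr (Or.inr h)
  · rintro (⟨v, hv, h⟩ | h | h)
    · exact Or.inl (mem_image_phi.2 ⟨v, hv, h⟩)
    · exact Or.inr (Or.inl h)
    · exact Or.inr (Or.inr h)

lemma case1_represents (hx0 : Represents x0 x0T) (hrep : Represents g T)
    (hcard : 2 ≤ T.card) (hu₁ : (u₁, [true]) ∈ T) :
    Represents (g.trans x0⁻¹) (T1 T u₁) := by
  have hdom : ∀ ω : CSeq, ∃! p : List Bool × List Bool, p ∈ T1 T u₁ ∧ IsPref p.1 ω := by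
    intro ω
    obtain ⟨p, ⟨hpT, hppref⟩, hpu⟩ := hrep.1 ω
    by_cases hp1 : p = (u₁, [true])
    · subst hp1
      simp only at hppref
      have hb : IsPref (u₁ ++ [ω u₁.length]) ω := isPref_append_elem hppref
      refine ⟨(u₁ ++ [ω u₁.length], if ω u₁.length then [true] else [false, true]),
        ⟨mem_T1.2 (Or.inr ?_), hb⟩, ?_⟩
      · cases hω : ω u₁.length <;> simp [hω]
      · rintro ⟨a, b⟩ ⟨hq, hqpref⟩
        simp only at hqpref
        rcases mem_T1.1 hq with ⟨v, hv, rfl⟩ | h | h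
        · have := hpu (a, v) ⟨Finset.mem_of_mem_erase hv, hqpref⟩
          exact absurd this (Finset.ne_of_mem_erase hv)
        · obtain ⟨rfl, rfl⟩ := Prod.mk.injEq .. ▸ h
          have := isPref_append_last hqpref
          rw [this]
          simp
        · obtain ⟨rfl, rfl⟩ := Prod.mk.injEq .. ▸ h
          have := isPref_append_last hqpref
          rw [this]
          simp
    · have hpE : p ∈ T.erase (u₁, [true]) := Finset.mem_erase.2 ⟨hp1, hpT⟩
      refine ⟨(p.1, phi p.2), ⟨mem_T1.2 (Or.inl ⟨p.2, hpE, rfl⟩), hppref⟩, ?_⟩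
      rintro ⟨a, b⟩ ⟨hq, hqpref⟩
      simp only at hqpref
      rcases mem_T1.1 hq with ⟨v, hv, rfl⟩ | h | h
      · have := hpu (a, v) ⟨Finset.mem_of_mem_erase hv, hqpref⟩
        rw [← this]
      · obtain ⟨rfl, rfl⟩ := Prod.mk.injEq .. ▸ h
        have hu : IsPref u₁ ω := isPref_of_prefix ⟨[false], rfl⟩ hqpref
        exact absurd (hpu (u₁, [true]) ⟨hu₁, hu⟩).symm hp1
      · obtain ⟨rfl, rfl⟩ := Prod.mk.injEq .. ▸ h
        have hu : IsPref u₁ ω := isPref_of_prefix ⟨[true], rfl⟩ hqpref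
        exact absurd (hpu (u₁, [true]) ⟨hu₁, hu⟩).symm hp1
  have hbr : ∀ p ∈ T1 T u₁, ∀ ω : CSeq, (g.trans x0⁻¹) (app p.1 ω) = app p.2 ω := by
    rintro ⟨a, b⟩ hq ω
    rcases mem_T1.1 hq with ⟨v, hv, rfl⟩ | h | h
    · obtain ⟨w, rfl⟩ := case1_shape hrep hcard hu₁ hv
      rw [Equiv.trans_apply, hrep.2.2 _ (Finset.mem_of_mem_erase hv),
        phi_spec hx0 (by simp) (by simp) ω]
    · obtain ⟨rfl, rfl⟩ := Prod.mk.injEq .. ▸ h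
      rw [Equiv.trans_apply, app_append, hrep.2.2 _ hu₁, ← app_append]
      exact x0inv_10 hx0 ω
    · obtain ⟨rfl, rfl⟩ := Prod.mk.injEq .. ▸ h
      rw [Equiv.trans_apply, app_append, hrep.2.2 _ hu₁, ← app_append]
      exact x0inv_11 hx0 ω
  exact ⟨hdom, range_complete _ _ hdom hbr, hbr⟩

lemma case1_card (hrep : Represents g T) (hu₁ : (u₁, [true]) ∈ T) :
    (T1 T u₁).card = T.card + 1 := by
  have himg : ((T.erase (u₁, [true])).image (fun p => (p.1, phi p.2))).card
      = T.card - 1 := by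
    rw [Finset.card_image_of_injOn, Finset.card_erase_of_mem hu₁]
    intro p hp q hq h
    simp only [Prod.mk.injEq] at h
    exact dom_inj hrep (Finset.mem_of_mem_erase hp) (Finset.mem_of_mem_erase hq) h.1
  have hA : (u₁ ++ [false], ([false, true] : List Bool)) ∉
      (T.erase (u₁, [true])).image (fun p => (p.1, phi p.2)) := by
    intro h
    obtain ⟨v, hv, -⟩ := mem_image_phi.1 h
    have := dom_pf hrep hu₁ (Finset.mem_of_mem_erase hv)
      (p := (u₁, [true])) (q := (u₁ ++ [false], v)) ⟨[false], rfl⟩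
    simp only [Prod.mk.injEq] at this
    have := congrArg List.length this.1
    simp at this
  have hB : (u₁ ++ [true], ([true] : List Bool)) ∉
      (T.erase (u₁, [true])).image (fun p => (p.1, phi p.2)) := by
    intro h
    obtain ⟨v, hv, -⟩ := mem_image_phi.1 h
    have := dom_pf hrep hu₁ (Finset.mem_of_mem_erase hv)
      (p := (u₁, [true])) (q := (u₁ ++ [true], v)) ⟨[true], rfl⟩
    simp only [Prod.mk.injEq] at this
    have := congrArg List.length this.1
    simp at this
  have hcard1 : 1 ≤ T.card := Finset.card_pos.2 ⟨_, hu₁⟩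
  rw [T1, Finset.card_union_of_disjoint, himg]
  · rw [Finset.card_insert_of_notMem (by simp), Finset.card_singleton]
    omega
  · rw [Finset.disjoint_right]
    intro q hq
    simp only [Finset.mem_insert, Finset.mem_singleton] at hq
    rcases hq with rfl | rfl
    · exact hA
    · exact hB

lemma case1_reduced (hrep : Represents g T) (hred : Reduced T)
    (hcard : 2 ≤ T.card) (hu₁ : (u₁, [true]) ∈ T) : Reduced (T1 T u₁) := by
  intro x y ⟨h1, h2⟩
  rcases mem_T1.1 h1 with ⟨v₁, hv1, hp1⟩ | hA1 | hB1
  · rcases mem_T1.1 h2 with ⟨v₂, hv2, hp2⟩ | hA2 | hB2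
    · -- both images
      obtain ⟨w₁, rfl⟩ := case1_shape hrep hcard hu₁ hv1
      obtain ⟨w₂, rfl⟩ := case1_shape hrep hcard hu₁ hv2
      simp only [phi] at hp1 hp2
      rcases y with _ | ⟨c, y'⟩
      · simp at hp1
      · rcases y' with _ | ⟨d, y''⟩
        · simp at hp2
        · simp at hp1 hp2
          obtain ⟨rfl, rfl, rfl⟩ := hp1
          obtain ⟨-, -, rfl⟩ := hp2
          exact hred x (false :: y'')
            ⟨by simpa using Finset.mem_of_mem_erase hv1,
             by simpa using Finset.mem_of_mem_erase hv2⟩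
    · -- second is A: domain ends in false but needs true
      have := (Prod.mk.injEq .. ▸ hA2).1
      exact absurd (append_single_inj this).2 (by simp)
    · -- second is B: y = [], x = u₁; then first forces phi v = [false]
      have h2' := Prod.mk.injEq .. ▸ hB2
      obtain ⟨hx, hy⟩ := h2'
      obtain ⟨rfl, -⟩ := append_single_inj hx
      have hy' : y = [] := by simpa using hy
      subst hy'
      obtain ⟨w₁, rfl⟩ := case1_shape hrep hcard hu₁ hv1
      simp [phi] at hp1
  · -- first is A: range [false, true] ends in true but needs false
    have := (Prod.mk.injEq .. ▸ hA1).2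
    exact absurd (append_single_inj (y := y) (z := [false]) (b := false) (c := true) this).2
      (by simp)
  · -- first is B: domain ends in true but needs false
    have := (Prod.mk.injEq .. ▸ hB1).1
    exact absurd (append_single_inj this).2 (by simp)

end Case1

lemma triple_card {g : VPerm} {T : Finset (List Bool × List Bool)}
    (hrep : Represents g T) (hcard : 2 ≤ T.card) {A B C : List Bool}
    (hA : (A, [false]) ∈ T) (hB : (B, [true, false]) ∈ T)
    (hC : (C, [true, true]) ∈ T) : T.card ≤ 3 := by
  have hsub : T ⊆ {(A, [false]), (B, [true, false]), (C, [true, true])} := by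
    rintro ⟨u, v⟩ hp
    have hv := range_ne_nil hrep hcard hp
    simp only [Finset.mem_insert, Finset.mem_singleton]
    match v, hv with
    | false :: w, _ =>
        have := ran_pf hrep hA hp (p := (A, [false])) (q := (u, false :: w)) ⟨w, rfl⟩
        exact Or.inl this.symm
    | [true], _ =>
        have := ran_pf hrep hp hB (p := (u, [true])) (q := (B, [true, false])) ⟨[false], rfl⟩
        simp only [Prod.mk.injEq] at this
        simp at this
    | true :: false :: w, _ =>
        have := ran_pf hrep hB hp (p := (B, [true, false])) (q := (u, true :: false :: w)) ⟨w, rfl⟩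
        exact Or.inr (Or.inl this.symm)
    | true :: true :: w, _ =>
        have := ran_pf hrep hC hp (p := (C, [true, true])) (q := (u, true :: true :: w)) ⟨w, rfl⟩
        exact Or.inr (Or.inr this.symm)
  refine (Finset.card_le_card hsub).trans ?_
  refine (Finset.card_insert_le _ _).trans (Nat.succ_le_succ ?_)
  refine (Finset.card_insert_le _ _).trans (Nat.succ_le_succ ?_)
  simp

section Case2b

variable {x0 g : VPerm} {T : Finset (List Bool × List Bool)} {a : List Bool}

/-- The table for `g·x0⁻¹` when the branches `a0 → 0` and `a1 → 10` are present. -/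
def T3 (T : Finset (List Bool × List Bool)) (a : List Bool) :
    Finset (List Bool × List Bool) :=
  ((T.erase (a ++ [false], [false])).erase (a ++ [true], [true, false])).image
      (fun p => (p.1, phi p.2)) ∪ {(a, [false])}

lemma mem_T3 {c b : List Bool} :
    (c, b) ∈ T3 T a ↔
      (∃ v, (c, v) ∈ (T.erase (a ++ [false], [false])).erase (a ++ [true], [true, false]) ∧
        phi v = b) ∨ (c, b) = (a, [false]) := by
  simp only [T3, Finset.mem_union, Finset.mem_singleton]
  constructor
  · rintro (h | h)
    · obtain ⟨v, hv, h⟩ := mem_image_phi.1 h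
      exact Or.inl ⟨v, hv, h⟩
    · exact Or.inr h
  · rintro (⟨v, hv, h⟩ | h)
    · exact Or.inl (mem_image_phi.2 ⟨v, hv, h⟩)
    · exact Or.inr h

lemma case2b_represents (hx0 : Represents x0 x0T) (hrep : Represents g T)
    (hcard : 2 ≤ T.card) (hno1 : ∀ u, (u, [true]) ∉ T)
    (hP0 : (a ++ [false], [false]) ∈ T) (hP1 : (a ++ [true], [true, false]) ∈ T) :
    Represents (g.trans x0⁻¹) (T3 T a) := by
  set E := (T.erase (a ++ [false], [false])).erase (a ++ [true], [true, false]) with hE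
  have hEsub : ∀ {p : List Bool × List Bool}, p ∈ E → p ∈ T := by
    intro p hp
    exact Finset.mem_of_mem_erase (Finset.mem_of_mem_erase hp)
  have hdom : ∀ ω : CSeq, ∃! p : List Bool × List Bool, p ∈ T3 T a ∧ IsPref p.1 ω := by
    intro ω
    obtain ⟨p, ⟨hpT, hppref⟩, hpu⟩ := hrep.1 ω
    by_cases hp01 : p = (a ++ [false], [false]) ∨ p = (a ++ [true], [true, false])
    · have hapref : IsPref a ω := by
        rcases hp01 with rfl | rfl
        · exact isPref_of_prefix ⟨[false], rfl⟩ hppref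
        · exact isPref_of_prefix ⟨[true], rfl⟩ hppref
      refine ⟨(a, [false]), ⟨mem_T3.2 (Or.inr rfl), hapref⟩, ?_⟩
      rintro ⟨c, b⟩ ⟨hq, hqpref⟩
      simp only at hqpref
      rcases mem_T3.1 hq with ⟨v, hv, rfl⟩ | h
      · have heq := hpu (c, v) ⟨hEsub hv, hqpref⟩
        rcases hp01 with rfl | rfl
        · exact absurd heq (Finset.ne_of_mem_erase (Finset.mem_of_mem_erase hv))
        · exact absurd heq (Finset.ne_of_mem_erase hv)
      · exact h
    · push_neg at hp01
      have hpE : p ∈ E := Finset.mem_erase.2 ⟨hp01.2, Finset.mem_erase.2 ⟨hp01.1, hpT⟩⟩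
      refine ⟨(p.1, phi p.2), ⟨mem_T3.2 (Or.inl ⟨p.2, hpE, rfl⟩), hppref⟩, ?_⟩
      rintro ⟨c, b⟩ ⟨hq, hqpref⟩
      simp only at hqpref
      rcases mem_T3.1 hq with ⟨v, hv, rfl⟩ | h
      · have := hpu (c, v) ⟨hEsub hv, hqpref⟩
        rw [← this]
      · have hc : a = c := (congrArg Prod.fst h).symm
        subst hc
        have hb : IsPref (a ++ [ω a.length]) ω := isPref_append_elem hqpref
        cases hω : ω a.length
        · rw [hω] at hb
          exact absurd (hpu _ ⟨hP0, hb⟩).symm hp01.1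
        · rw [hω] at hb
          exact absurd (hpu _ ⟨hP1, hb⟩).symm hp01.2
  have hbr : ∀ p ∈ T3 T a, ∀ ω : CSeq, (g.trans x0⁻¹) (app p.1 ω) = app p.2 ω := by
    rintro ⟨c, b⟩ hq ω
    rcases mem_T3.1 hq with ⟨v, hv, rfl⟩ | h
    · rw [Equiv.trans_apply, hrep.2.2 _ (hEsub hv),
        phi_spec hx0 (range_ne_nil hrep hcard (hEsub hv))
          (fun h => hno1 c (h ▸ hEsub hv)) ω]
    · have hc : a = c := (congrArg Prod.fst h).symm
      subst hc
      have hb2 : b = [false] := congrArg Prod.snd h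
      subst hb2
      have hsplit : app a ω = app (a ++ [ω 0]) (fun n => ω (n + 1)) := by
        rw [app_append, ← cons_expand]
      rw [Equiv.trans_apply, hsplit]
      cases hω : ω 0
      · rw [hrep.2.2 _ hP0, x0inv_0 hx0]
        show app ([false] ++ [false]) (fun n => ω (n + 1)) = app [false] ω
        rw [app_append]
        congr 1
        conv_rhs => rw [cons_expand ω]
        rw [hω]
      · rw [hrep.2.2 _ hP1, x0inv_10 hx0]
        show app ([false] ++ [true]) (fun n => ω (n + 1)) = app [false] ω
        rw [app_append]
        congr 1
        conv_rhs => rw [cons_expand ω]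
        rw [hω]
  exact ⟨hdom, range_complete _ _ hdom hbr, hbr⟩

lemma case2b_card (hrep : Represents g T)
    (hP0 : (a ++ [false], [false]) ∈ T) (hP1 : (a ++ [true], [true, false]) ∈ T) :
    (T3 T a).card = T.card - 1 := by
  set E := (T.erase (a ++ [false], [false])).erase (a ++ [true], [true, false]) with hE
  have hEsub : ∀ {p : List Bool × List Bool}, p ∈ E → p ∈ T := by
    intro p hp
    exact Finset.mem_of_mem_erase (Finset.mem_of_mem_erase hp)
  have hP1E : (a ++ [true], [true, false]) ∈ T.erase (a ++ [false], [false]) :=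
    Finset.mem_erase.2 ⟨by simp, hP1⟩
  have hEcard : E.card = T.card - 2 := by
    rw [hE, Finset.card_erase_of_mem hP1E, Finset.card_erase_of_mem hP0]
    omega
  have himg : (E.image (fun p => (p.1, phi p.2))).card = T.card - 2 := by
    rw [Finset.card_image_of_injOn, hEcard]
    intro p hp q hq h
    simp only [Prod.mk.injEq] at h
    exact dom_inj hrep (hEsub hp) (hEsub hq) h.1
  have hnew : (a, ([false] : List Bool)) ∉ E.image (fun p => (p.1, phi p.2)) := by
    intro h
    obtain ⟨v, hv, -⟩ := mem_image_phi.1 h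
    have := dom_pf hrep (hEsub hv) hP0 (p := (a, v))
      (q := (a ++ [false], [false])) ⟨[false], rfl⟩
    simp only [Prod.mk.injEq] at this
    have := congrArg List.length this.1
    simp at this
  have hcard2 : 2 ≤ T.card := by
    have h1 : ({(a ++ [false], [false]), (a ++ [true], [true, false])} :
        Finset (List Bool × List Bool)) ⊆ T := by
      intro p hp
      simp only [Finset.mem_insert, Finset.mem_singleton] at hp
      rcases hp with rfl | rfl
      · exact hP0
      · exact hP1
    have := Finset.card_le_card h1
    rwa [Finset.card_insert_of_notMem (by simp), Finset.card_singleton] at this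
  have hdisj : Disjoint (E.image (fun p => (p.1, phi p.2)))
      ({(a, ([false] : List Bool))} : Finset (List Bool × List Bool)) := by
    rw [Finset.disjoint_right]
    intro q hq
    simp only [Finset.mem_singleton] at hq
    subst hq
    exact hnew
  rw [T3, ← hE, Finset.card_union_of_disjoint hdisj, himg, Finset.card_singleton]
  omega

lemma case2b_reduced (hrep : Represents g T) (hred : Reduced T) (hcard : 4 ≤ T.card)
    (hno1 : ∀ u, (u, [true]) ∉ T)
    (hP0 : (a ++ [false], [false]) ∈ T) (hP1 : (a ++ [true], [true, false]) ∈ T) :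
    Reduced (T3 T a) := by
  have hcard2 : 2 ≤ T.card := by omega
  set E := (T.erase (a ++ [false], [false])).erase (a ++ [true], [true, false]) with hE
  have hEsub : ∀ {p : List Bool × List Bool}, p ∈ E → p ∈ T := by
    intro p hp
    exact Finset.mem_of_mem_erase (Finset.mem_of_mem_erase hp)
  intro x y ⟨h1, h2⟩
  rcases mem_T3.1 h1 with ⟨v₁, hv1, hp1⟩ | hA1
  · rcases mem_T3.1 h2 with ⟨v₂, hv2, hp2⟩ | hA2
    · -- both images: forces the erased configuration, contradiction
      obtain ⟨e1, -, -⟩ := phi_red_core hrep hred hcard2 hno1 (hEsub hv1) (hEsub hv2) hp1 hp2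
      subst e1
      have := ran_pf hrep (hEsub hv1) hP0 (p := (x ++ [false], [false]))
        (q := (a ++ [false], [false])) (List.prefix_refl _)
      rw [this] at hv1
      exact absurd rfl (Finset.ne_of_mem_erase (Finset.mem_of_mem_erase hv1))
    · -- second is new: range [false] should end in true
      have := (Prod.mk.injEq .. ▸ hA2).2
      exact absurd (append_single_inj (y := y) (z := []) (b := true) (c := false) this).2
        (by simp)
  · -- first is new: a = x ++ [false], y = []
    have h1' := Prod.mk.injEq .. ▸ hA1
    obtain ⟨hx, hy⟩ := h1'
    have hy' : y = [] := by
      have := append_single_inj (y := y) (z := []) (b := false) (c := false) hy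
      exact this.1
    subst hy'
    rcases mem_T3.1 h2 with ⟨v₂, hv2, hp2⟩ | hA2
    · -- partner image with phi v₂ = [true] : v₂ = [true, true], triple configuration
      have hv₂T := hEsub hv2
      rcases range_shape hrep hcard2 hno1 hv₂T with ⟨w, rfl⟩ | ⟨w, rfl⟩ | ⟨w, rfl⟩ <;>
        simp only [phi] at hp2
      · simp at hp2
      · simp at hp2
      · have hw : w = [] := by simpa using hp2
        subst hw
        rw [← hx] at hP0 hP1
        have := triple_card hrep hcard2 (A := x ++ [false] ++ [false])
          (B := x ++ [false] ++ [true]) (C := x ++ [true]) hP0 hP1 hv₂T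
        omega
    · -- partner new: ranges [true] vs [false]
      have := (Prod.mk.injEq .. ▸ hA2).2
      simp at this
  
end Case2b

lemma phi_replicate {m : ℕ} (hm : 2 ≤ m) :
    phi (List.replicate m true) = List.replicate (m - 1) true := by
  obtain ⟨k, rfl⟩ : ∃ k, m = k + 2 := ⟨m - 2, by omega⟩
  show phi (List.replicate (k + 1 + 1) true) = _
  rw [List.replicate_succ, List.replicate_succ]
  show true :: List.replicate k true = _
  rw [show k + 2 - 1 = k + 1 by omega, List.replicate_succ]

theorem stmt6' (x0 : VPerm) (hx0 : Represents x0 x0T)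
    (g : VPerm) (hN : 4 ≤ Nbr g) :
    (Nbr g - 1 ≤ Nbr (g.trans x0⁻¹) ∧ Nbr (g.trans x0⁻¹) ≤ Nbr g + 1) ∧
    (ell1 g = 1 → Nbr (g.trans x0⁻¹) = Nbr g + 1 ∧ ell1 (g.trans x0⁻¹) = 1) ∧
    (ell1 g ≠ 1 →
      (Nbr (g.trans x0⁻¹) = Nbr g ∨ Nbr (g.trans x0⁻¹) = Nbr g - 1) ∧
      ell1 (g.trans x0⁻¹) = ell1 g - 1) ∧
    (ell1 g ≠ 1 →
      (StrictPrefOfBranch g [false] ∨ StrictPrefOfBranch g [true, false]) →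
      Nbr (g.trans x0⁻¹) = Nbr g ∧
      StrictPrefOfBranch (g.trans x0⁻¹) [false]) := by
  obtain ⟨T, hrep, hred, hcardN⟩ := exists_reduced_rep (g := g) (by omega)
  have hcard4 : 4 ≤ T.card := by omega
  have hcard2 : 2 ≤ T.card := by omega
  by_cases hc1 : ∃ u₁, (u₁, [true]) ∈ T
  · -- Case 1 : `1` is a range code of `g`
    obtain ⟨u₁, hu₁⟩ := hc1
    have hrep' := case1_represents hx0 hrep hcard2 hu₁
    have hred' := case1_reduced hrep hred hcard2 hu₁
    have hNbr : Nbr (g.trans x0⁻¹) = Nbr g + 1 := by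
      rw [Nbr_eq hrep' hred', case1_card hrep hu₁, hcardN]
    have hellg : ell1 g = 1 := ell1_eq hrep hred le_rfl (by simpa using hu₁)
    have hellh : ell1 (g.trans x0⁻¹) = 1 := by
      apply ell1_eq hrep' hred' le_rfl (u := u₁ ++ [true])
      simpa using mem_T1.2 (Or.inr (Or.inr rfl))
    exact ⟨⟨by omega, by omega⟩, fun _ => ⟨hNbr, hellh⟩, fun hne => absurd hellg hne,
      fun hne _ => absurd hellg hne⟩
  · push_neg at hc1
    obtain ⟨u, m, hm1, hmem⟩ := exists_true_branch hrep hcard2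
    have hellg : ell1 g = m := ell1_eq hrep hred hm1 hmem
    have hm2 : 2 ≤ m := by
      rcases Nat.lt_or_ge m 2 with h' | h'
      · have hm : m = 1 := by omega
        subst hm
        exact absurd (by simpa using hmem) (hc1 u)
      · exact h'
    have hellgne : ell1 g ≠ 1 := by omega
    by_cases hC : ∃ a, (a ++ [false], [false]) ∈ T ∧ (a ++ [true], [true, false]) ∈ T
    · -- Case 2b : one reduction
      obtain ⟨a, hP0, hP1⟩ := hC
      have hrep' := case2b_represents hx0 hrep hcard2 hc1 hP0 hP1
      have hred' := case2b_reduced hrep hred hcard4 hc1 hP0 hP1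
      have hNbr : Nbr (g.trans x0⁻¹) = Nbr g - 1 := by
        rw [Nbr_eq hrep' hred', case2b_card hrep hP0 hP1, hcardN]
      have hne0 : (u, List.replicate m true) ≠ (a ++ [false], [false]) := by
        intro heq
        have := (Prod.mk.injEq .. ▸ heq).2
        have := congrArg List.length this
        simp at this
        omega
      have hne1 : (u, List.replicate m true) ≠ (a ++ [true], [true, false]) := by
        intro heq
        have h2 := (Prod.mk.injEq .. ▸ heq).2
        have : false ∈ List.replicate m true := h2 ▸ (by simp)
        simp [List.mem_replicate] at this
      have hmemE : (u, List.replicate m true) ∈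
          (T.erase (a ++ [false], [false])).erase (a ++ [true], [true, false]) :=
        Finset.mem_erase.2 ⟨hne1, Finset.mem_erase.2 ⟨hne0, hmem⟩⟩
      have hmemT3 : (u, List.replicate (m - 1) true) ∈ T3 T a :=
        mem_T3.2 (Or.inl ⟨List.replicate m true, hmemE, phi_replicate hm2⟩)
      have hellh : ell1 (g.trans x0⁻¹) = m - 1 :=
        ell1_eq hrep' hred' (by omega) hmemT3
      refine ⟨⟨by omega, by omega⟩,
        fun he => absurd (hellg.symm.trans he) (by omega),
        fun _ => ⟨Or.inr hNbr, by rw [hellh, hellg]⟩,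
        fun _ hpre => absurd hpre ?_⟩
      rintro (⟨u', v', hbr', hpref, hne⟩ | ⟨u', v', hbr', hpref, hne⟩)
      · rw [isBranch_iff hrep hred] at hbr'
        have := ran_pf hrep hP0 hbr' (p := (a ++ [false], [false])) (q := (u', v')) hpref
        exact hne (congrArg Prod.snd this)
      · rw [isBranch_iff hrep hred] at hbr'
        have := ran_pf hrep hP1 hbr' (p := (a ++ [true], [true, false])) (q := (u', v')) hpref
        exact hne (congrArg Prod.snd this)
    · -- Case 2a : no reduction
      obtain ⟨hrep', hcard'⟩ := case2a_represents hx0 hrep hcard2 hc1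
      have hred' := case2a_reduced hrep hred hcard2 hc1 hC
      have hNbr : Nbr (g.trans x0⁻¹) = Nbr g := by
        rw [Nbr_eq hrep' hred', hcard', hcardN]
      have hmemI : (u, List.replicate (m - 1) true) ∈
          T.image (fun p => (p.1, phi p.2)) :=
        mem_image_phi.2 ⟨List.replicate m true, hmem, phi_replicate hm2⟩
      have hellh : ell1 (g.trans x0⁻¹) = m - 1 :=
        ell1_eq hrep' hred' (by omega) hmemI
      refine ⟨⟨by omega, by omega⟩,
        fun he => absurd (hellg.symm.trans he) (by omega),
        fun _ => ⟨Or.inl hNbr, by rw [hellh, hellg]⟩,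
        fun _ hpre => ⟨hNbr, ?_⟩⟩
      rcases hpre with ⟨u', v', hbr', hpref, hne⟩ | ⟨u', v', hbr', hpref, hne⟩
      · rw [isBranch_iff hrep hred] at hbr'
        obtain ⟨w, rfl⟩ := hpref
        refine ⟨u', phi ([false] ++ w), (isBranch_iff hrep' hred').2
          (mem_image_phi.2 ⟨[false] ++ w, hbr', rfl⟩), ?_, ?_⟩
        · show [false] <+: phi (false :: w)
          exact ⟨false :: w, rfl⟩
        · show [false] ≠ phi (false :: w)
          intro heq
          have := congrArg List.length heq
          simp [phi] at this
      · rw [isBranch_iff hrep hred] at hbr'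
        obtain ⟨w, rfl⟩ := hpref
        refine ⟨u', phi ([true, false] ++ w), (isBranch_iff hrep' hred').2
          (mem_image_phi.2 ⟨[true, false] ++ w, hbr', rfl⟩), ?_, ?_⟩
        · show [false] <+: phi (true :: false :: w)
          exact ⟨true :: w, rfl⟩
        · show [false] ≠ phi (true :: false :: w)
          intro heq
          have := congrArg List.length heq
          simp [phi] at this


end Aux

/-- For `g ∈ V` with `N(g) ≥ 4`:
`N(g)−1 ≤ N(g·x0⁻¹) ≤ N(g)+1`; (1) if `ℓ1(g) = 1` then `N(g·x0⁻¹) = N(g)+1`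
and `ℓ1(g·x0⁻¹) = 1`; (2) if `ℓ1(g) ≠ 1` then `N(g·x0⁻¹) ∈ {N(g), N(g)−1}`
and `ℓ1(g·x0⁻¹) = ℓ1(g)−1`; (3) if `ℓ1(g) ≠ 1` and `0` or `10` is a strict
prefix of the range code of some branch of `g`, then `N(g·x0⁻¹) = N(g)` and
`0` is a strict prefix of the range code of some branch of `g·x0⁻¹`. -/
theorem stmt6 (x0 : VPerm) (hx0 : Represents x0 x0T)
    (g : VPerm) (hg : InV g) (hN : 4 ≤ Nbr g) :
    (Nbr g - 1 ≤ Nbr (g.trans x0⁻¹) ∧ Nbr (g.trans x0⁻¹) ≤ Nbr g + 1) ∧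
    (ell1 g = 1 → Nbr (g.trans x0⁻¹) = Nbr g + 1 ∧ ell1 (g.trans x0⁻¹) = 1) ∧
    (ell1 g ≠ 1 →
      (Nbr (g.trans x0⁻¹) = Nbr g ∨ Nbr (g.trans x0⁻¹) = Nbr g - 1) ∧
      ell1 (g.trans x0⁻¹) = ell1 g - 1) ∧
    (ell1 g ≠ 1 →
      (StrictPrefOfBranch g [false] ∨ StrictPrefOfBranch g [true, false]) →
      Nbr (g.trans x0⁻¹) = Nbr g ∧
      StrictPrefOfBranch (g.trans x0⁻¹) [false]) :=
  stmt6' x0 hx0 g hN
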